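/- arXiv:2203.06748 — 3 statements merged into one kernel-verified Lean document; each statement's English description precedes it below -/
import Mathlib

section
/- The split likelihood ratio test is valid in finite samples: if $X_{1,0},\dots,X_{m_0 n,0}$ and the data set $D_1$ are independent, $\widehat{\theta}_{n,1}$ is any $D_1$-measurable estimator taking values in $\Theta$, $\widehat{\theta}_{n,0}$ maximizes the $D_0$-likelihood over $\Theta_0$, and $\theta \in \Theta_0$, then for $\Lambda_n = 2(\ell_0(\widehat{\theta}_{n,1}) - \ell_0(\widehat{\theta}_{n,0}))$ one has $P_\theta(\Lambda_n > -2\log\alpha) \le \alpha$ for every $\alpha \in (0,1)$. -/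
open MeasureTheory ProbabilityTheory
open scoped ENNReal

/-- Product of independent coordinates: the lower integral of a product of coordinate
functions against a finite product measure equals the product of the integrals. -/
lemma lintegral_pi_prod_aux {𝓧 : Type*} [MeasurableSpace 𝓧] (ν : Measure 𝓧)
    [SigmaFinite ν] :
    ∀ (m : ℕ) (f : Fin m → 𝓧 → ℝ≥0∞), (∀ i, Measurable (f i)) →
      ∫⁻ xs, ∏ i, f i (xs i) ∂(Measure.pi fun _ : Fin m => ν)
        = ∏ i, ∫⁻ x, f i x ∂ν := by
  intro m
  induction m with
  | zero =>
      intro f hf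
      simp only [Finset.univ_eq_empty, Finset.prod_empty, lintegral_one]
      rw [Measure.pi_univ]
      simp
  | succ n ih =>
      intro f hf
      have hmp := measurePreserving_piFinSuccAbove (fun _ : Fin (n + 1) => ν) 0
      have hF : Measurable fun z : 𝓧 × (Fin n → 𝓧) =>
          f 0 z.1 * ∏ j : Fin n, f j.succ (z.2 j) := by
        refine ((hf 0).comp measurable_fst).mul ?_
        exact Finset.measurable_prod _ fun j _ =>
          (hf j.succ).comp ((measurable_pi_apply j).comp measurable_snd)
      calc ∫⁻ xs, ∏ i, f i (xs i) ∂(Measure.pi fun _ : Fin (n + 1) => ν)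
          = ∫⁻ xs, (fun z : 𝓧 × (Fin n → 𝓧) => f 0 z.1 * ∏ j : Fin n, f j.succ (z.2 j))
              ((MeasurableEquiv.piFinSuccAbove (fun _ : Fin (n + 1) => 𝓧) 0) xs)
              ∂(Measure.pi fun _ : Fin (n + 1) => ν) := by
            refine lintegral_congr fun xs => ?_
            simp [MeasurableEquiv.piFinSuccAbove_apply, Fin.prod_univ_succ,
              Fin.succAbove_zero, Fin.tail]
        _ = ∫⁻ z, f 0 z.1 * ∏ j : Fin n, f j.succ (z.2 j)
              ∂(ν.prod (Measure.pi fun _ : Fin n => ν)) := hmp.lintegral_comp hF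
        _ = (∫⁻ x, f 0 x ∂ν) * ∫⁻ xs : Fin n → 𝓧, ∏ j : Fin n, f j.succ (xs j)
              ∂(Measure.pi fun _ : Fin n => ν) := by
            have hg : Measurable fun xs : Fin n → 𝓧 => ∏ j : Fin n, f j.succ (xs j) :=
              Finset.measurable_prod _ fun j _ =>
                (hf j.succ).comp (measurable_pi_apply j)
            exact lintegral_prod_mul (hf 0).aemeasurable hg.aemeasurable
        _ = (∫⁻ x, f 0 x ∂ν) * ∏ j : Fin n, ∫⁻ x, f j.succ x ∂ν := by
            rw [ih _ fun j => hf j.succ]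
        _ = ∏ i, ∫⁻ x, f i x ∂ν := (Fin.prod_univ_succ fun i => ∫⁻ x, f i x ∂ν).symm

/-- Finite-sample validity of the split likelihood ratio test: if the `D₀`-data `X`
are i.i.d. from `P_θ` with `θ ∈ Θ₀`, independent of the `D₁`-data `W`, the estimator
`θhat1` is `D₁`-measurable, and `θhat0` maximizes the `D₀`-log-likelihood over `Θ₀`,
then the SLRT rejecting when `Λ_n > -2 log α` has level `α`. -/
theorem stmt_2 {𝓧 Θ Ω β : Type*} [MeasurableSpace 𝓧] [MeasurableSpace Θ]
    [MeasurableSpace Ω] [MeasurableSpace β]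
    (μ : Measure 𝓧) (p : Θ → 𝓧 → ℝ)
    (hmeas : Measurable (Function.uncurry p))
    (hpos : ∀ ϑ x, 0 < p ϑ x)
    (hdens : ∀ ϑ, ∫⁻ x, ENNReal.ofReal (p ϑ x) ∂μ = 1)
    (Θ0 : Set Θ) (θ : Θ) (hθ : θ ∈ Θ0)
    (P : Measure Ω) [IsProbabilityMeasure P]
    (m : ℕ) (X : Ω → Fin m → 𝓧) (hX : Measurable X)
    (hXlaw : Measure.map X P = Measure.pi fun _ => μ.withDensity fun x => ENNReal.ofReal (p θ x))
    (W : Ω → β) (hW : Measurable W)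
    (hindep : IndepFun X W P)
    (g : β → Θ) (hg : Measurable g)
    (θhat1 : Ω → Θ) (hθ1 : θhat1 = g ∘ W)
    (θhat0 : Ω → Θ)
    (hθ0 : ∀ ω, θhat0 ω ∈ Θ0 ∧ ∀ ϑ ∈ Θ0,
      ∑ i, Real.log (p ϑ (X ω i)) ≤ ∑ i, Real.log (p (θhat0 ω) (X ω i)))
    (α : ℝ) (hα : α ∈ Set.Ioo (0:ℝ) 1) :
    P {ω | 2 * (∑ i, Real.log (p (θhat1 ω) (X ω i))
          - ∑ i, Real.log (p (θhat0 ω) (X ω i))) > -2 * Real.log α}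
      ≤ ENNReal.ofReal α := by
  obtain ⟨hα0, hα1⟩ := hα
  have hpm : ∀ ϑ, Measurable (p ϑ) := fun ϑ => hmeas.comp measurable_prodMk_left
  set ν : Measure 𝓧 := μ.withDensity fun x => ENNReal.ofReal (p θ x) with hνdef
  have hνprob : IsProbabilityMeasure ν := by
    constructor
    rw [hνdef, withDensity_apply _ MeasurableSet.univ, setLIntegral_univ]
    exact hdens θ
  -- measurability of the ratio
  have hrmeas : Measurable fun z : Θ × 𝓧 => ENNReal.ofReal (p z.1 z.2 / p θ z.2) :=
    (hmeas.div ((hpm θ).comp measurable_snd)).ennreal_ofReal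
  -- each single ratio integrates to 1 against ν
  have hint1 : ∀ ϑ, ∫⁻ x, ENNReal.ofReal (p ϑ x / p θ x) ∂ν = 1 := by
    intro ϑ
    rw [hνdef, lintegral_withDensity_eq_lintegral_mul _ (hpm θ).ennreal_ofReal
      (by exact ((hpm ϑ).div (hpm θ)).ennreal_ofReal :
        Measurable fun x => ENNReal.ofReal (p ϑ x / p θ x)), ← hdens ϑ]
    refine lintegral_congr fun x => ?_
    simp only [Pi.mul_apply]
    rw [← ENNReal.ofReal_mul (hpos θ x).le]
    congr 1
    rw [mul_comm, div_mul_cancel₀ _ (hpos θ x).ne']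
  -- the test statistic
  set T : Ω → ℝ≥0∞ :=
    fun ω => ∏ i, ENNReal.ofReal (p (g (W ω)) (X ω i) / p θ (X ω i)) with hTdef
  have hT : Measurable T :=
    Finset.measurable_prod _ fun i _ =>
      hrmeas.comp ((hg.comp hW).prodMk ((measurable_pi_apply i).comp hX))
  -- E[T] = 1
  have hTint : ∫⁻ ω, T ω ∂P = 1 := by
    have hmap : P.map (fun ω => (X ω, W ω)) = (P.map X).prod (P.map W) :=
      (indepFun_iff_map_prod_eq_prod_map_map hX.aemeasurable hW.aemeasurable).mp hindep
    have hF : Measurable fun z : (Fin m → 𝓧) × β =>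
        ∏ i, ENNReal.ofReal (p (g z.2) (z.1 i) / p θ (z.1 i)) :=
      Finset.measurable_prod _ fun i _ =>
        hrmeas.comp ((hg.comp measurable_snd).prodMk
          ((measurable_pi_apply i).comp measurable_fst))
    haveI : IsProbabilityMeasure (P.map X) := by
      rw [hXlaw]; infer_instance
    haveI : IsProbabilityMeasure (P.map W) := Measure.isProbabilityMeasure_map hW.aemeasurable
    have step1 : ∫⁻ ω, T ω ∂P
        = ∫⁻ z : (Fin m → 𝓧) × β, ∏ i, ENNReal.ofReal (p (g z.2) (z.1 i) / p θ (z.1 i))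
            ∂((P.map X).prod (P.map W)) := by
      rw [← hmap, lintegral_map hF (hX.prodMk hW)]
    rw [step1, lintegral_prod_symm' _ hF, hXlaw]
    have inner : ∀ w : β,
        ∫⁻ xs : Fin m → 𝓧, ∏ i, ENNReal.ofReal (p (g w) (xs i) / p θ (xs i))
          ∂(Measure.pi fun _ : Fin m => ν) = 1 := by
      intro w
      rw [lintegral_pi_prod_aux ν m
        (fun _ x => ENNReal.ofReal (p (g w) x / p θ x))
        (fun _ => ((hpm (g w)).div (hpm θ)).ennreal_ofReal)]
      simp [hint1 (g w)]
    simp only [hνdef] at inner ⊢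
    simp only [inner, lintegral_one, measure_univ]
  -- the rejection event is contained in {T ≥ 1/α}
  have hsub : {ω | 2 * (∑ i, Real.log (p (θhat1 ω) (X ω i))
        - ∑ i, Real.log (p (θhat0 ω) (X ω i))) > -2 * Real.log α}
      ⊆ {ω | ENNReal.ofReal (1 / α) ≤ T ω} := by
    intro ω hω
    simp only [Set.mem_setOf_eq] at hω ⊢
    have h0 : ∑ i, Real.log (p θ (X ω i)) ≤ ∑ i, Real.log (p (θhat0 ω) (X ω i)) :=
      (hθ0 ω).2 θ hθ
    have h1 : ∑ i, Real.log (p (θhat1 ω) (X ω i)) - ∑ i, Real.log (p θ (X ω i))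
        > - Real.log α := by linarith
    have hθ1ω : θhat1 ω = g (W ω) := by rw [hθ1]; rfl
    set R : ℝ := ∏ i, (p (g (W ω)) (X ω i) / p θ (X ω i)) with hRdef
    have hRpos : 0 < R :=
      Finset.prod_pos fun i _ => div_pos (hpos _ _) (hpos _ _)
    have hlogR : Real.log R
        = ∑ i, Real.log (p (g (W ω)) (X ω i)) - ∑ i, Real.log (p θ (X ω i)) := by
      rw [hRdef, Real.log_prod fun i _ => (div_pos (hpos _ _) (hpos _ _)).ne',
        ← Finset.sum_sub_distrib]
      exact Finset.sum_congr rfl fun i _ =>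
        Real.log_div (hpos _ _).ne' (hpos _ _).ne'
    have hlt : Real.log (1 / α) < Real.log R := by
      rw [hlogR, one_div, Real.log_inv]
      rw [hθ1ω] at h1
      linarith
    have hR : 1 / α < R :=
      (Real.log_lt_log_iff (by positivity) hRpos).mp hlt
    have hTω : T ω = ENNReal.ofReal R := by
      rw [hTdef, hRdef, ENNReal.ofReal_prod_of_nonneg
        fun i _ => (div_pos (hpos _ _) (hpos _ _)).le]
    rw [hTω]
    exact ENNReal.ofReal_le_ofReal hR.le
  -- Markov inequality
  have hmarkov := mul_meas_ge_le_lintegral₀ (μ := P) hT.aemeasurable (ENNReal.ofReal (1 / α))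
  rw [hTint] at hmarkov
  have hεpos : (0 : ℝ≥0∞) < ENNReal.ofReal (1 / α) := ENNReal.ofReal_pos.mpr (by positivity)
  have hεtop : ENNReal.ofReal (1 / α) ≠ ⊤ := ENNReal.ofReal_ne_top
  calc P {ω | 2 * (∑ i, Real.log (p (θhat1 ω) (X ω i))
          - ∑ i, Real.log (p (θhat0 ω) (X ω i))) > -2 * Real.log α}
      ≤ P {ω | ENNReal.ofReal (1 / α) ≤ T ω} := measure_mono hsub
    _ = (ENNReal.ofReal (1 / α))⁻¹
          * (ENNReal.ofReal (1 / α) * P {ω | ENNReal.ofReal (1 / α) ≤ T ω}) := by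
        rw [← mul_assoc, ENNReal.inv_mul_cancel hεpos.ne' hεtop, one_mul]
    _ ≤ (ENNReal.ofReal (1 / α))⁻¹ * 1 := mul_le_mul_right hmarkov _
    _ = ENNReal.ofReal α := by
        rw [mul_one, ← ENNReal.ofReal_inv_of_pos (by positivity : (0:ℝ) < 1 / α),
          one_div, inv_inv]
end

section
/- Variance of the noncentral split chi-square distribution: if $Z = \|X_{[p]} + \sqrt{m_0} h\|^2 - \|X - \sqrt{m_0/m_1} Y\|^2$ with $X, Y \sim \mathcal{N}_d(0,I_d)$ independent, $m_1 = 1-m_0$, $h \in \mathbb{R}^p$ with $\|h\|^2 = \delta$, then $\mathrm{Var}[Z] = 2(d-p) + 4d\,m_0/(1-m_0) + 2d\,m_0^2/(1-m_0)^2 + 4 m_0 \delta$. -/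
open MeasureTheory ProbabilityTheory

section AuxSplitChi

open MeasureTheory ProbabilityTheory Real
open scoped ENNReal NNReal

namespace SplitChi

lemma Jint (n : ℕ) : Integrable (fun x : ℝ => x ^ n * Real.exp (-x^2/2)) := by
  have h := integrable_rpow_mul_exp_neg_mul_sq (b := (1:ℝ)/2) (by norm_num)
    (s := (n:ℝ)) (lt_of_lt_of_le (by norm_num) (Nat.cast_nonneg n))
  have e : (fun x : ℝ => x ^ (n:ℝ) * Real.exp (-(1/2:ℝ) * x ^ 2))
      = fun x : ℝ => x ^ n * Real.exp (-x^2/2) := by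
    funext x
    rw [Real.rpow_natCast, show -(1/2:ℝ) * x ^ 2 = -x^2/2 by ring]
  rwa [e] at h

lemma J0 : ∫ x : ℝ, Real.exp (-x^2/2) = Real.sqrt (2*π) := by
  have h := integral_gaussian (1/2 : ℝ)
  have e : (fun x : ℝ => Real.exp (-(1/2:ℝ) * x ^ 2)) = fun x : ℝ => Real.exp (-x^2/2) := by
    funext x; rw [show -(1/2:ℝ) * x ^ 2 = -x^2/2 by ring]
  rw [e] at h
  rw [h]; rw [show π / (1/2 : ℝ) = 2 * π by ring]

lemma hasDerivAt_gauss (x : ℝ) :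
    HasDerivAt (fun x : ℝ => Real.exp (-x^2/2)) (-x * Real.exp (-x^2/2)) x := by
  have h0 : HasDerivAt (fun x : ℝ => -x^2/2) (-x) x := by
    have h := ((hasDerivAt_pow 2 x).neg).div_const 2
    have e : (fun x : ℝ => -x^2/2) = fun x : ℝ => (-(x^2))/2 := by funext y; ring
    rw [e]
    refine h.congr_deriv ?_
    push_cast; ring
  have := h0.exp
  refine this.congr_deriv ?_
  ring

lemma J1 : ∫ x : ℝ, x * Real.exp (-x^2/2) = 0 := by
  have hderiv : ∀ x : ℝ, HasDerivAt (fun x : ℝ => -Real.exp (-x^2/2))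
      (x * Real.exp (-x^2/2)) x := by
    intro x
    have := (hasDerivAt_gauss x).neg
    refine this.congr_deriv ?_
    ring
  have hint : Integrable (fun x : ℝ => x * Real.exp (-x^2/2)) := by
    simpa using Jint 1
  have hf : Integrable (fun x : ℝ => -Real.exp (-x^2/2)) := by
    have h0 : Integrable (fun x : ℝ => Real.exp (-x^2/2)) := by simpa using Jint 0
    exact h0.neg
  exact integral_eq_zero_of_hasDerivAt_of_integrable hderiv hint hf

lemma Jrec (n : ℕ) : ∫ x : ℝ, x ^ (n+2) * Real.exp (-x^2/2)
    = ((n:ℝ)+1) * ∫ x : ℝ, x ^ n * Real.exp (-x^2/2) := by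
  have hderiv : ∀ x : ℝ, HasDerivAt (fun x : ℝ => x ^ (n+1) * Real.exp (-x^2/2))
      (((n:ℝ)+1) * (x ^ n * Real.exp (-x^2/2)) - x ^ (n+2) * Real.exp (-x^2/2)) x := by
    intro x
    have := (hasDerivAt_pow (n+1) x).mul (hasDerivAt_gauss x)
    refine this.congr_deriv ?_
    push_cast; ring
  have h := integral_eq_zero_of_hasDerivAt_of_integrable hderiv
    (((Jint n).const_mul ((n:ℝ)+1)).sub (Jint (n+2))) (Jint (n+1))
  rw [integral_sub ((Jint n).const_mul ((n:ℝ)+1)) (Jint (n+2)), MeasureTheory.integral_const_mul] at h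
  linarith

lemma J2 : ∫ x : ℝ, x ^ 2 * Real.exp (-x^2/2) = Real.sqrt (2*π) := by
  have := Jrec 0
  simp only [Nat.cast_zero, zero_add, pow_zero, one_mul] at this
  rw [this, J0]

lemma J3 : ∫ x : ℝ, x ^ 3 * Real.exp (-x^2/2) = 0 := by
  have := Jrec 1
  simp only [Nat.cast_one, pow_one] at this
  rw [this, J1, mul_zero]

lemma J4 : ∫ x : ℝ, x ^ 4 * Real.exp (-x^2/2) = 3 * Real.sqrt (2*π) := by
  have := Jrec 2
  norm_num at this
  rw [this, J2]

end SplitChi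



namespace SplitChi

lemma pdf_eq : gaussianPDFReal 0 1 = fun x : ℝ => (Real.sqrt (2*π))⁻¹ * Real.exp (-x^2/2) := by
  funext x
  rw [gaussianPDFReal]
  norm_num

lemma gauss_density :
    (gaussianReal 0 1 : Measure ℝ)
      = (volume : Measure ℝ).withDensity (fun x => ((gaussianPDFReal 0 1 x).toNNReal : ℝ≥0∞)) := by
  rw [gaussianReal_of_var_ne_zero 0 one_ne_zero]
  rfl

lemma integral_gaussianReal_eq (f : ℝ → ℝ) :
    ∫ x, f x ∂(gaussianReal 0 1) = ∫ x, gaussianPDFReal 0 1 x * f x := by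
  rw [gauss_density, integral_withDensity_eq_integral_smul
    (measurable_gaussianPDFReal 0 1).real_toNNReal f]
  congr 1
  funext x
  rw [NNReal.smul_def, smul_eq_mul, Real.coe_toNNReal _ (gaussianPDFReal_nonneg 0 1 x)]

lemma integrable_gaussianReal {f : ℝ → ℝ}
    (hf : Integrable (fun x => f x * gaussianPDFReal 0 1 x)) :
    Integrable f (gaussianReal 0 1) := by
  rw [gauss_density, integrable_withDensity_iff (measurable_gaussianPDFReal 0 1).real_toNNReal.coe_nnreal_ennreal
    (Filter.Eventually.of_forall fun x => ENNReal.coe_lt_top)]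
  refine hf.congr (Filter.Eventually.of_forall fun x => ?_)
  simp only [ENNReal.coe_toReal, Real.coe_toNNReal _ (gaussianPDFReal_nonneg 0 1 x)]

end SplitChi

namespace SplitChi

lemma sqrt2pi_pos : 0 < Real.sqrt (2*π) := Real.sqrt_pos.2 (by positivity)

lemma mInt (n : ℕ) : Integrable (fun x : ℝ => x ^ n) (gaussianReal 0 1) := by
  apply integrable_gaussianReal
  have : (fun x : ℝ => x ^ n * gaussianPDFReal 0 1 x)
      = fun x : ℝ => (Real.sqrt (2*π))⁻¹ * (x ^ n * Real.exp (-x^2/2)) := by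
    funext x; rw [pdf_eq]; ring
  rw [this]
  exact (Jint n).const_mul _

lemma mVal (n : ℕ) : ∫ x, x ^ n ∂(gaussianReal 0 1)
    = (Real.sqrt (2*π))⁻¹ * ∫ x : ℝ, x ^ n * Real.exp (-x^2/2) := by
  rw [integral_gaussianReal_eq]
  rw [show (fun x : ℝ => gaussianPDFReal 0 1 x * x ^ n)
      = fun x : ℝ => (Real.sqrt (2*π))⁻¹ * (x ^ n * Real.exp (-x^2/2)) by
    funext x; rw [pdf_eq]; ring]
  rw [MeasureTheory.integral_const_mul]

lemma m_zero : ∫ x, x ^ 0 ∂(gaussianReal 0 1) = 1 := by simp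
lemma m_one : ∫ x, x ^ 1 ∂(gaussianReal 0 1) = 0 := by
  rw [mVal]; simp only [pow_one, J1, mul_zero]
lemma m_two : ∫ x, x ^ 2 ∂(gaussianReal 0 1) = 1 := by
  rw [mVal, J2, inv_mul_cancel₀ sqrt2pi_pos.ne']
lemma m_three : ∫ x, x ^ 3 ∂(gaussianReal 0 1) = 0 := by
  rw [mVal, J3, mul_zero]
lemma m_four : ∫ x, x ^ 4 ∂(gaussianReal 0 1) = 3 := by
  rw [mVal, J4, show (Real.sqrt (2*π))⁻¹ * (3 * Real.sqrt (2*π))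
    = 3 * ((Real.sqrt (2*π))⁻¹ * Real.sqrt (2*π)) by ring, inv_mul_cancel₀ sqrt2pi_pos.ne',
    mul_one]

end SplitChi
section S3
open MeasureTheory ProbabilityTheory Real
set_option linter.unusedSectionVars false
namespace SplitChi

variable {α : Type*} [MeasurableSpace α] (μ : Measure α) [IsProbabilityMeasure μ] {d : ℕ}

lemma pi_integrable (f : Fin d → α → ℝ) (hf : ∀ i, Integrable (f i) μ) :
    Integrable (fun x : Fin d → α => ∏ i, f i (x i)) (Measure.pi fun _ => μ) := by
  letI : MeasureSpace α := ⟨μ⟩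
  exact Integrable.fintype_prod (f := f) hf

lemma pi_integral (f : Fin d → α → ℝ) :
    ∫ x : Fin d → α, ∏ i, f i (x i) ∂(Measure.pi fun _ => μ) = ∏ i, ∫ x, f i x ∂μ := by
  letI : MeasureSpace α := ⟨μ⟩
  exact integral_fintype_prod_eq_prod f

variable {μ}

lemma single_eq (i : Fin d) (g : α → ℝ) (x : Fin d → α) :
    (∏ k, (if k = i then g else fun _ => 1) (x k)) = g (x i) := by
  have : ∀ k : Fin d, (if k = i then g else fun _ => (1:ℝ)) (x k)
      = if k = i then g (x k) else 1 := fun k => by split <;> rfl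
  simp only [this]
  simp

lemma pi_integrable_single (i : Fin d) (g : α → ℝ) (hg : Integrable g μ) :
    Integrable (fun x : Fin d → α => g (x i)) (Measure.pi fun _ => μ) := by
  have h := pi_integrable μ (fun k => if k = i then g else fun _ => 1)
    (fun k => by by_cases hk : k = i <;> simp [hk, hg])
  exact h.congr (Filter.Eventually.of_forall fun x => single_eq i g x)

lemma pi_integral_single (i : Fin d) (g : α → ℝ) :
    ∫ x : Fin d → α, g (x i) ∂(Measure.pi fun _ => μ) = ∫ x, g x ∂μ := by
  rw [show (fun x : Fin d → α => g (x i))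
      = fun x => ∏ k, (if k = i then g else fun _ => 1) (x k) from
    funext fun x => (single_eq i g x).symm]
  rw [pi_integral]
  rw [Finset.prod_eq_single i (fun k _ hk => by simp [hk]) (by simp)]
  simp

lemma pair_eq {i j : Fin d} (hij : i ≠ j) (g₁ g₂ : α → ℝ) (x : Fin d → α) :
    (∏ k, (if k = i then g₁ else if k = j then g₂ else fun _ => 1) (x k))
      = g₁ (x i) * g₂ (x j) := by
  have : ∀ k : Fin d, (if k = i then g₁ else if k = j then g₂ else fun _ => (1:ℝ)) (x k)
      = if k = i then g₁ (x k) else if k = j then g₂ (x k) else 1 := fun k => by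
    split
    · rfl
    · split <;> rfl
  simp only [this]
  rw [← Finset.mul_prod_erase Finset.univ _ (Finset.mem_univ i)]
  rw [← Finset.mul_prod_erase _ _
    (Finset.mem_erase.2 ⟨hij.symm, Finset.mem_univ j⟩)]
  rw [if_pos rfl, if_neg hij.symm, if_pos rfl]
  rw [Finset.prod_eq_one fun k hk => by
    rcases Finset.mem_erase.1 hk with ⟨hkj, hk2⟩
    rcases Finset.mem_erase.1 hk2 with ⟨hki, -⟩
    simp [hki, hkj]]
  ring

lemma pi_integrable_pair {i j : Fin d} (hij : i ≠ j) (g₁ g₂ : α → ℝ)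
    (h₁ : Integrable g₁ μ) (h₂ : Integrable g₂ μ) :
    Integrable (fun x : Fin d → α => g₁ (x i) * g₂ (x j)) (Measure.pi fun _ => μ) := by
  have h := pi_integrable μ (fun k => if k = i then g₁ else if k = j then g₂ else fun _ => 1)
    (fun k => by
      by_cases hk : k = i
      · simpa [hk] using h₁
      · by_cases hk2 : k = j <;> simp [hk, hk2, h₂, hij.symm])
  exact h.congr (Filter.Eventually.of_forall fun x => pair_eq hij g₁ g₂ x)

lemma pi_integral_pair {i j : Fin d} (hij : i ≠ j) (g₁ g₂ : α → ℝ) :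
    ∫ x : Fin d → α, g₁ (x i) * g₂ (x j) ∂(Measure.pi fun _ => μ)
      = (∫ x, g₁ x ∂μ) * ∫ x, g₂ x ∂μ := by
  rw [show (fun x : Fin d → α => g₁ (x i) * g₂ (x j))
      = fun x => ∏ k, (if k = i then g₁ else if k = j then g₂ else fun _ => 1) (x k) from
    funext fun x => (pair_eq hij g₁ g₂ x).symm]
  rw [pi_integral]
  rw [← Finset.mul_prod_erase Finset.univ _ (Finset.mem_univ i)]
  rw [← Finset.mul_prod_erase _ _
    (Finset.mem_erase.2 ⟨hij.symm, Finset.mem_univ j⟩)]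
  rw [if_pos rfl, if_neg hij.symm, if_pos rfl]
  rw [Finset.prod_eq_one fun k hk => by
    rcases Finset.mem_erase.1 hk with ⟨hkj, hk2⟩
    rcases Finset.mem_erase.1 hk2 with ⟨hki, -⟩
    simp [hki, hkj]]
  ring

end SplitChi
end S3
section S4
open MeasureTheory ProbabilityTheory Real
namespace SplitChi

noncomputable def mm (n : ℕ) : ℝ := ∫ x, x ^ n ∂(gaussianReal 0 1)

lemma mm_zero : mm 0 = 1 := m_zero
lemma mm_one : mm 1 = 0 := m_one
lemma mm_two : mm 2 = 1 := m_two
lemma mm_three : mm 3 = 0 := m_three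
lemma mm_four : mm 4 = 3 := m_four

noncomputable def μ2 : Measure (ℝ × ℝ) := (gaussianReal 0 1).prod (gaussianReal 0 1)

instance : IsProbabilityMeasure μ2 := by unfold μ2; infer_instance

lemma Iab (a b : ℕ) : Integrable (fun z : ℝ × ℝ => z.1 ^ a * z.2 ^ b) μ2 :=
  (mInt a).mul_prod (mInt b)

lemma Eab (a b : ℕ) : ∫ z, z.1 ^ a * z.2 ^ b ∂μ2 = mm a * mm b :=
  integral_prod_mul _ _

lemma polyInt {K : ℕ} (co : Fin K → ℝ) (e1 e2 : Fin K → ℕ) :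
    Integrable (fun z : ℝ × ℝ => ∑ k, co k * (z.1 ^ e1 k * z.2 ^ e2 k)) μ2 :=
  integrable_finset_sum _ fun k _ => (Iab (e1 k) (e2 k)).const_mul _

lemma polyVal {K : ℕ} (co : Fin K → ℝ) (e1 e2 : Fin K → ℕ) :
    ∫ z, (∑ k, co k * (z.1 ^ e1 k * z.2 ^ e2 k)) ∂μ2
      = ∑ k, co k * (mm (e1 k) * mm (e2 k)) := by
  rw [integral_finset_sum _ fun k _ => (Iab (e1 k) (e2 k)).const_mul _]
  exact Finset.sum_congr rfl fun k _ => by rw [MeasureTheory.integral_const_mul, Eab]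

section coord
variable (a c : ℝ)

lemma repA1 : (fun z : ℝ × ℝ => (z.1 + a)^2 - (z.1 - c * z.2)^2)
    = fun z : ℝ × ℝ => ∑ k, (![2*a, a^2, 2*c, -c^2]) k
        * (z.1 ^ (![1,0,1,0] : Fin 4 → ℕ) k * z.2 ^ (![0,0,1,2] : Fin 4 → ℕ) k) := by
  funext z
  simp [Fin.sum_univ_four]
  ring

lemma IA1 : Integrable (fun z : ℝ × ℝ => (z.1 + a)^2 - (z.1 - c * z.2)^2) μ2 := by
  rw [repA1]; exact polyInt _ _ _

lemma EA1 : ∫ z, ((z.1 + a)^2 - (z.1 - c * z.2)^2) ∂μ2 = a^2 - c^2 := by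
  rw [repA1, polyVal]
  simp [Fin.sum_univ_four, mm_zero, mm_one, mm_two]
  ring

lemma repA1sq : (fun z : ℝ × ℝ => ((z.1 + a)^2 - (z.1 - c * z.2)^2)
      * ((z.1 + a)^2 - (z.1 - c * z.2)^2))
    = fun z : ℝ × ℝ => ∑ k,
        (![4*a^2, 4*c^2, c^4, a^4, 8*a*c, -4*a*c^2, 4*a^3, -4*c^3, 4*a^2*c, -2*a^2*c^2]) k
        * (z.1 ^ (![2,2,0,0,2,1,1,1,1,0] : Fin 10 → ℕ) k
          * z.2 ^ (![0,2,4,0,1,2,0,3,1,2] : Fin 10 → ℕ) k) := by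
  funext z
  simp [Fin.sum_univ_succ]
  ring

lemma IA1sq : Integrable (fun z : ℝ × ℝ => ((z.1 + a)^2 - (z.1 - c * z.2)^2)
    * ((z.1 + a)^2 - (z.1 - c * z.2)^2)) μ2 := by
  rw [repA1sq]; exact polyInt _ _ _

lemma SA1 : ∫ z, (((z.1 + a)^2 - (z.1 - c * z.2)^2)
      * ((z.1 + a)^2 - (z.1 - c * z.2)^2)) ∂μ2
    = 4*a^2 + 4*c^2 + 3*c^4 + a^4 - 2*a^2*c^2 := by
  rw [repA1sq, polyVal]
  simp [Fin.sum_univ_succ, mm_zero, mm_one, mm_two, mm_three, mm_four]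
  ring

lemma repA2 : (fun z : ℝ × ℝ => (0:ℝ) - (z.1 - c * z.2)^2)
    = fun z : ℝ × ℝ => ∑ k, (![-1, 2*c, -c^2]) k
        * (z.1 ^ (![2,1,0] : Fin 3 → ℕ) k * z.2 ^ (![0,1,2] : Fin 3 → ℕ) k) := by
  funext z
  simp [Fin.sum_univ_three]
  ring

lemma IA2 : Integrable (fun z : ℝ × ℝ => (0:ℝ) - (z.1 - c * z.2)^2) μ2 := by
  rw [repA2]; exact polyInt _ _ _

lemma EA2 : ∫ z, ((0:ℝ) - (z.1 - c * z.2)^2) ∂μ2 = -1 - c^2 := by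
  rw [repA2, polyVal]
  simp [Fin.sum_univ_three, mm_zero, mm_one, mm_two]
  ring

lemma repA2sq : (fun z : ℝ × ℝ => ((0:ℝ) - (z.1 - c * z.2)^2) * ((0:ℝ) - (z.1 - c * z.2)^2))
    = fun z : ℝ × ℝ => ∑ k, (![1, -4*c, 6*c^2, -4*c^3, c^4]) k
        * (z.1 ^ (![4,3,2,1,0] : Fin 5 → ℕ) k * z.2 ^ (![0,1,2,3,4] : Fin 5 → ℕ) k) := by
  funext z
  simp [Fin.sum_univ_five]
  ring

lemma IA2sq : Integrable (fun z : ℝ × ℝ => ((0:ℝ) - (z.1 - c * z.2)^2)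
    * ((0:ℝ) - (z.1 - c * z.2)^2)) μ2 := by
  rw [repA2sq]; exact polyInt _ _ _

lemma SA2 : ∫ z, (((0:ℝ) - (z.1 - c * z.2)^2) * ((0:ℝ) - (z.1 - c * z.2)^2)) ∂μ2
    = 3 + 6*c^2 + 3*c^4 := by
  rw [repA2sq, polyVal]
  simp [Fin.sum_univ_five, mm_zero, mm_one, mm_two, mm_three, mm_four]
  ring

end coord

lemma sum_dite_lt {M : Type*} [AddCommMonoid M] {d p : ℕ} (hp : p ≤ d) (f : Fin p → M) :
    (∑ i : Fin d, if hi : (i : ℕ) < p then f ⟨i, hi⟩ else 0) = ∑ j : Fin p, f j := by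
  set g : ℕ → M := fun n => if hn : n < p then f ⟨n, hn⟩ else 0 with hg
  have h1 : (∑ i : Fin d, if hi : (i : ℕ) < p then f ⟨i, hi⟩ else 0) = ∑ i : Fin d, g i := rfl
  rw [h1, Fin.sum_univ_eq_sum_range g d]
  rw [← Finset.sum_subset (Finset.range_subset_range.2 hp) (fun n _ hn => by
    have : ¬ n < p := fun hlt => hn (Finset.mem_range.2 hlt)
    simp [hg, this])]
  rw [← Fin.sum_univ_eq_sum_range g p]
  exact Finset.sum_congr rfl fun j _ => by simp [hg, j.isLt]

end SplitChi
end S4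

end AuxSplitChi

open Real SplitChi

/-- The standard Gaussian distribution on `ℝ^d`. -/
noncomputable def stdGaussian (d : ℕ) : Measure (Fin d → ℝ) :=
  Measure.pi fun _ => gaussianReal 0 1

instance stdGaussian_prob (d : ℕ) : IsProbabilityMeasure (stdGaussian d) := by
  unfold _root_.stdGaussian; infer_instance

/-- Variance of the noncentral split chi-square distribution:
`Var[Z] = 2(d-p) + 4d m₀/(1-m₀) + 2d m₀²/(1-m₀)² + 4 m₀ δ`. -/
theorem stmt_5 {Ω : Type*} [MeasurableSpace Ω] (P : Measure Ω) [IsProbabilityMeasure P]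
    (d p : ℕ) (hp : p ≤ d) (X Y : Ω → Fin d → ℝ)
    (hX : Measure.map X P = stdGaussian d) (hY : Measure.map Y P = stdGaussian d)
    (hXY : IndepFun X Y P)
    (m0 : ℝ) (hm0 : m0 ∈ Set.Ioo (0:ℝ) 1) (m1 : ℝ) (hm1 : m1 = 1 - m0)
    (h : Fin p → ℝ) (δ : ℝ) (hδ : ∑ i, h i ^ 2 = δ) :
    variance (fun ω => ∑ i : Fin p, (X ω (Fin.castLE hp i) + Real.sqrt m0 * h i) ^ 2
        - ∑ i : Fin d, (X ω i - Real.sqrt (m0 / m1) * Y ω i) ^ 2) P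
      = 2 * ((d : ℝ) - p) + 4 * d * m0 / (1 - m0) + 2 * d * m0 ^ 2 / (1 - m0) ^ 2
        + 4 * m0 * δ := by
  obtain ⟨hm0p, hm0lt⟩ := hm0
  have hm1pos : (0:ℝ) < m1 := by rw [hm1]; linarith
  set c : ℝ := Real.sqrt (m0 / m1) with hcdef
  have hc2 : c ^ 2 = m0 / m1 := Real.sq_sqrt (by positivity)
  -- measurability
  have hXm : AEMeasurable X P := by
    by_contra hcon
    rw [Measure.map_of_not_aemeasurable hcon] at hX
    exact (IsProbabilityMeasure.ne_zero (stdGaussian d)) hX.symm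
  have hYm : AEMeasurable Y P := by
    by_contra hcon
    rw [Measure.map_of_not_aemeasurable hcon] at hY
    exact (IsProbabilityMeasure.ne_zero (stdGaussian d)) hY.symm
  have hjoint : Measure.map (fun ω => (X ω, Y ω)) P = (stdGaussian d).prod (stdGaussian d) := by
    exact ((indepFun_iff_map_prod_eq_prod_map_map hXm hYm).1 hXY).trans (by rw [hX, hY])
  set ν : Measure (Fin d → ℝ × ℝ) := Measure.pi fun _ => μ2 with hν
  haveI : IsProbabilityMeasure ν := by rw [hν]; infer_instance
  set e := MeasurableEquiv.arrowProdEquivProdArrow ℝ ℝ (Fin d) with he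
  have hpres : MeasurePreserving e ν ((stdGaussian d).prod (stdGaussian d)) :=
    measurePreserving_arrowProdEquivProdArrow ℝ ℝ (Fin d)
      (fun _ => gaussianReal 0 1) (fun _ => gaussianReal 0 1)
  set T : Ω → (Fin d → ℝ × ℝ) := fun ω => e.symm (X ω, Y ω) with hTdef
  have hTm : AEMeasurable T P := e.symm.measurable.comp_aemeasurable (hXm.prodMk hYm)
  have hmapT : Measure.map T P = ν := by
    have h1 : Measure.map T P = Measure.map (⇑e.symm) (Measure.map (fun ω => (X ω, Y ω)) P) :=
      (AEMeasurable.map_map_of_aemeasurable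
        e.symm.measurable.aemeasurable (hXm.prodMk hYm)).symm
    rw [h1, hjoint, (hpres.symm e).map_eq]
  -- coordinate functions
  set A : Fin d → ℝ × ℝ → ℝ := fun i z =>
    (if hi : (i : ℕ) < p then (z.1 + Real.sqrt m0 * h ⟨i, hi⟩)^2 else 0) - (z.1 - c * z.2)^2
    with hAdef
  set F : (Fin d → ℝ × ℝ) → ℝ := fun w => ∑ i, A i (w i) with hFdef
  have hAi : ∀ (i : Fin d) (hi : (i:ℕ) < p),
      A i = fun z : ℝ × ℝ => (z.1 + Real.sqrt m0 * h ⟨i, hi⟩)^2 - (z.1 - c * z.2)^2 := by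
    intro i hi; funext z; rw [hAdef]; simp only [dif_pos hi]
  have hAi' : ∀ (i : Fin d), ¬ ((i:ℕ) < p) →
      A i = fun z : ℝ × ℝ => (0:ℝ) - (z.1 - c * z.2)^2 := by
    intro i hi; funext z; rw [hAdef]; simp only [dif_neg hi]
  have hAmeas : ∀ i, Measurable (A i) := by
    intro i
    by_cases hi : (i:ℕ) < p
    · rw [hAi i hi]; fun_prop
    · rw [hAi' i hi]; fun_prop
  have hFmeas : Measurable F := by
    rw [hFdef]
    exact Finset.measurable_sum _ fun i _ => (hAmeas i).comp (measurable_pi_apply i)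
  have hIA : ∀ i, Integrable (A i) μ2 := by
    intro i
    by_cases hi : (i:ℕ) < p
    · rw [hAi i hi]; exact IA1 _ c
    · rw [hAi' i hi]; exact IA2 c
  have hIAsq : ∀ i, Integrable (fun z => A i z * A i z) μ2 := by
    intro i
    by_cases hi : (i:ℕ) < p
    · rw [hAi i hi]; exact IA1sq _ c
    · rw [hAi' i hi]; exact IA2sq c
  -- identify the random variable with F ∘ T
  have hZ : (fun ω => ∑ i : Fin p, (X ω (Fin.castLE hp i) + Real.sqrt m0 * h i) ^ 2
        - ∑ i : Fin d, (X ω i - Real.sqrt (m0 / m1) * Y ω i) ^ 2) = F ∘ T := by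
    funext ω
    show _ = ∑ i, A i (T ω i)
    have hTco : ∀ i, T ω i = (X ω i, Y ω i) := fun i => rfl
    simp only [hTco, hAdef]
    rw [Finset.sum_sub_distrib]
    congr 1
    calc ∑ i : Fin p, (X ω (Fin.castLE hp i) + Real.sqrt m0 * h i) ^ 2
        = ∑ i : Fin d, (if hi : (i:ℕ) < p then
            (X ω (Fin.castLE hp ⟨i, hi⟩) + Real.sqrt m0 * h ⟨i, hi⟩)^2 else 0) :=
          (sum_dite_lt hp _).symm
      _ = ∑ i : Fin d, (if hi : (i:ℕ) < p then (X ω i + Real.sqrt m0 * h ⟨i, hi⟩)^2 else 0) := by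
          refine Finset.sum_congr rfl fun i _ => ?_
          by_cases hi : (i:ℕ) < p
          · rw [dif_pos hi, dif_pos hi]
            have : Fin.castLE hp ⟨(i:ℕ), hi⟩ = i := Fin.ext rfl
            rw [this]
          · rw [dif_neg hi, dif_neg hi]
  rw [hZ]
  -- L² membership and variance transfer
  have hsqeq : ∀ w, F w ^ 2 = ∑ i, ∑ j, A i (w i) * A j (w j) := by
    intro w
    rw [hFdef, sq, Finset.sum_mul_sum]
  have hIntF2 : Integrable (fun w => F w ^ 2) ν := by
    rw [show (fun w => F w ^ 2) = fun w => ∑ i, ∑ j, A i (w i) * A j (w j) from funext hsqeq]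
    refine integrable_finset_sum _ fun i _ => integrable_finset_sum _ fun j _ => ?_
    by_cases hij : i = j
    · subst hij; exact pi_integrable_single i (fun z => A i z * A i z) (hIAsq i)
    · exact pi_integrable_pair hij (A i) (A j) (hIA i) (hIA j)
  have hMem : MemLp F 2 ν := (memLp_two_iff_integrable_sq hFmeas.aestronglyMeasurable).2 hIntF2
  have hMemP : MemLp (F ∘ T) 2 P := by
    refine (memLp_map_measure_iff ?_ hTm).1 ?_
    · rw [hmapT]; exact hFmeas.aestronglyMeasurable
    · rw [hmapT]; exact hMem
  have hvar : variance (F ∘ T) P = (∫ w, F w ^ 2 ∂ν) - (∫ w, F w ∂ν)^2 := by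
    rw [variance_eq_sub hMemP]
    congr 1
    · show ∫ ω, (F (T ω))^2 ∂P = _
      rw [← hmapT, integral_map hTm]
      rw [hmapT]
      exact (hFmeas.pow_const 2).aestronglyMeasurable
    · congr 1
      show ∫ ω, F (T ω) ∂P = _
      rw [← hmapT, integral_map hTm]
      rw [hmapT]
      exact hFmeas.aestronglyMeasurable
  rw [hvar]
  -- compute the integrals
  set Ei : Fin d → ℝ := fun i => ∫ z, A i z ∂μ2 with hEidef
  set Si : Fin d → ℝ := fun i => ∫ z, A i z * A i z ∂μ2 with hSidef
  have hI1 : ∫ w, F w ∂ν = ∑ i, Ei i := by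
    rw [hFdef, hν]
    rw [integral_finset_sum _ fun i _ => pi_integrable_single i (A i) (hIA i)]
    exact Finset.sum_congr rfl fun i _ => pi_integral_single i (A i)
  have hI2 : ∫ w, F w ^ 2 ∂ν = ∑ i, ∑ j, (if i = j then Si i else Ei i * Ei j) := by
    rw [show (fun w => F w ^ 2) = fun w => ∑ i, ∑ j, A i (w i) * A j (w j) from funext hsqeq, hν]
    rw [integral_finset_sum _ fun i _ => integrable_finset_sum _ fun j _ => by
      by_cases hij : i = j
      · subst hij; exact pi_integrable_single i (fun z => A i z * A i z) (hIAsq i)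
      · exact pi_integrable_pair hij (A i) (A j) (hIA i) (hIA j)]
    refine Finset.sum_congr rfl fun i _ => ?_
    rw [integral_finset_sum _ fun j _ => by
      by_cases hij : i = j
      · subst hij; exact pi_integrable_single i (fun z => A i z * A i z) (hIAsq i)
      · exact pi_integrable_pair hij (A i) (A j) (hIA i) (hIA j)]
    refine Finset.sum_congr rfl fun j _ => ?_
    by_cases hij : i = j
    · subst hij
      rw [if_pos rfl]
      exact pi_integral_single i (fun z => A i z * A i z)
    · rw [if_neg hij]
      exact pi_integral_pair hij (A i) (A j)
  rw [hI1, hI2]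
  -- diagonal reduction
  have hdiag : (∑ i, ∑ j, (if i = j then Si i else Ei i * Ei j)) - (∑ i, Ei i)^2
      = ∑ i, (Si i - Ei i ^ 2) := by
    rw [sq, Finset.sum_mul_sum, ← Finset.sum_sub_distrib]
    refine Finset.sum_congr rfl fun i _ => ?_
    rw [← Finset.sum_sub_distrib]
    rw [Finset.sum_eq_single i (fun j _ hj => by rw [if_neg (Ne.symm hj), sub_self])
      (fun hmem => (hmem (Finset.mem_univ i)).elim)]
    rw [if_pos rfl, sq]
  rw [hdiag]
  -- evaluate the sum
  have hterm : ∀ i : Fin d, Si i - Ei i ^ 2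
      = (if hi : (i:ℕ) < p then 4 * (m0 * (h ⟨i, hi⟩)^2) else 0)
        + ((2 + 4*c^2 + 2*c^4) - (if hi : (i:ℕ) < p then (2:ℝ) else 0)) := by
    intro i
    by_cases hi : (i:ℕ) < p
    · have ha2 : (Real.sqrt m0 * h ⟨i, hi⟩)^2 = m0 * (h ⟨i, hi⟩)^2 := by
        rw [mul_pow, Real.sq_sqrt hm0p.le]
      rw [hSidef, hEidef]
      simp only
      rw [hAi i hi, SA1, EA1, dif_pos hi, dif_pos hi]
      nlinarith [ha2]
    · rw [hSidef, hEidef]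
      simp only
      rw [hAi' i hi, SA2, EA2, dif_neg hi, dif_neg hi]
      ring
  rw [Finset.sum_congr rfl fun i _ => hterm i]
  rw [Finset.sum_add_distrib, Finset.sum_sub_distrib]
  rw [sum_dite_lt hp (f := fun j => 4 * (m0 * (h j)^2))]
  rw [sum_dite_lt hp (f := fun _ => (2:ℝ))]
  rw [Finset.sum_const, Finset.sum_const]
  have hsum4 : ∑ j : Fin p, 4 * (m0 * (h j)^2) = 4 * m0 * δ := by
    rw [← hδ, Finset.mul_sum]
    exact Finset.sum_congr rfl fun j _ => by ring
  rw [hsum4]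
  simp only [Finset.card_univ, Fintype.card_fin, nsmul_eq_mul]
  have hc4 : c^4 = (m0/m1)^2 := by rw [show c^4 = (c^2)^2 by ring, hc2]
  rw [hc2, hc4, hm1]
  have h1m : (1:ℝ) - m0 ≠ 0 := by linarith
  field_simp
  ring
end

section
/- Quadratic form representation of the split chi-square distribution: let $h \in \mathbb{R}^p$, $k = d - p$, $\mu = (h, 0, h, 0) \in \mathbb{R}^{2d}$ (with zeros in $\mathbb{R}^k$), let $\epsilon \sim \mathcal{N}_{2d}(0, \Sigma)$ with $\Sigma = \mathrm{diag}(m_0^{-1} I_d, m_1^{-1} I_d)$, $m_1 = 1 - m_0$, and let $A$ be the symmetric block matrix with blocks $A_{13} = A_{31} = I_p$, $A_{24} = A_{42} = I_k$, $A_{22} = -I_k$, $A_{33} = -I_p$, $A_{44} = -I_k$, and all other blocks zero. Then $m_0 (\epsilon + \mu)^T A (\epsilon + \mu)$ has the same distribution as $\|X_{[p]} + \sqrt{m_0} h\|^2 - \|X - \sqrt{m_0/m_1} Y\|^2$ for independent $X, Y \sim \mathcal{N}_d(0, I_d)$. -/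
open MeasureTheory ProbabilityTheory

section Aux
open Matrix

lemma stmt7_quad {ιp ιk : Type*} [Fintype ιp] [Fintype ιk] (s : ℝ) (a c h : ιp → ℝ) (b e : ιk → ℝ) :
    s * s * ((a+h) ⬝ᵥ (0 : ιp → ℝ) + -(b ⬝ᵥ b) + ((a+h) ⬝ᵥ (c+h) + b ⬝ᵥ e)
      + ((c+h) ⬝ᵥ (a+h) + e ⬝ᵥ b + (-((c+h) ⬝ᵥ (c+h)) + -(e ⬝ᵥ e))))
    = (s•a + s•h) ⬝ᵥ (s•a + s•h)
      - ((s•a - s•c) ⬝ᵥ (s•a - s•c) + (s•b - s•e) ⬝ᵥ (s•b - s•e)) := by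
  simp only [dotProduct_add, add_dotProduct, dotProduct_sub, sub_dotProduct,
    smul_dotProduct, dotProduct_smul, smul_eq_mul, dotProduct_zero]
  rw [dotProduct_comm c a, dotProduct_comm e b, dotProduct_comm h a, dotProduct_comm h c]
  ring

lemma stmt7_alg (p k : ℕ) (m0 : ℝ) (hm0 : 0 ≤ m0) (h : Fin p → ℝ)
    (v : (Fin p ⊕ Fin k) ⊕ (Fin p ⊕ Fin k) → ℝ) :
    m0 * dotProduct (fun i => v i + Sum.elim (Sum.elim h 0) (Sum.elim h 0) i)
      ((Matrix.fromBlocks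
      (Matrix.fromBlocks 0 0 0 (-1)) (Matrix.fromBlocks 1 0 0 1)
      (Matrix.fromBlocks 1 0 0 1) (Matrix.fromBlocks (-1) 0 0 (-1)) :
        Matrix ((Fin p ⊕ Fin k) ⊕ (Fin p ⊕ Fin k)) _ ℝ).mulVec
        fun i => v i + Sum.elim (Sum.elim h 0) (Sum.elim h 0) i)
    = ∑ i : Fin p, (Real.sqrt m0 * v (.inl (.inl i)) + Real.sqrt m0 * h i)^2
      - ∑ i : Fin p ⊕ Fin k, (Real.sqrt m0 * v (.inl i) - Real.sqrt m0 * v (.inr i))^2 := by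
  have hw : (fun i => v i + Sum.elim (Sum.elim h 0) (Sum.elim h 0) i)
      = Sum.elim (Sum.elim (fun i => v (.inl (.inl i)) + h i) (fun i => v (.inl (.inr i))))
        (Sum.elim (fun i => v (.inr (.inl i)) + h i) (fun i => v (.inr (.inr i)))) := by
    funext i; rcases i with (i|i)|(i|i) <;> simp
  rw [hw]
  set s := Real.sqrt m0 with hsdef
  have hs : s ^ 2 = m0 := Real.sq_sqrt hm0
  rw [← hs, sq]
  simp only [Matrix.fromBlocks_mulVec, sumElim_dotProduct_sumElim,
    Matrix.one_mulVec, Matrix.zero_mulVec, Matrix.neg_mulVec, Matrix.one_mulVec,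
    add_zero, zero_add, dotProduct_add, dotProduct_neg,
    Sum.elim_comp_inl, Sum.elim_comp_inr, Fintype.sum_sum_type]
  simp only [sq]
  exact stmt7_quad s (fun i => v (.inl (.inl i))) (fun i => v (.inr (.inl i))) h
    (fun i => v (.inl (.inr i))) (fun i => v (.inr (.inr i)))

end Aux

/-- Quadratic form representation of the split chi-square distribution:
with `ε ~ N_{2d}(0, diag(m₀⁻¹ I_d, m₁⁻¹ I_d))`, `μ = (h,0,h,0)` and the block matrix `A`
as in the paper, `m₀ (ε+μ)ᵀ A (ε+μ)` is distributed as
`‖X_[p] + √m₀ h‖² - ‖X - √(m₀/m₁) Y‖²` for independent standard Gaussians `X, Y`. -/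
theorem stmt_7 {Ω : Type*} [MeasurableSpace Ω] (P : Measure Ω) [IsProbabilityMeasure P]
    (p k : ℕ) (m0 : ℝ) (hm0 : m0 ∈ Set.Ioo (0:ℝ) 1) (m1 : ℝ) (hm1 : m1 = 1 - m0)
    (h : Fin p → ℝ)
    (X Y : Ω → Fin (p + k) → ℝ)
    (hX : Measure.map X P = stdGaussian (p + k))
    (hY : Measure.map Y P = stdGaussian (p + k))
    (hXY : IndepFun X Y P)
    (ε : Ω → ((Fin p ⊕ Fin k) ⊕ (Fin p ⊕ Fin k)) → ℝ)
    (hε : Measure.map ε P = Measure.pi fun i =>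
      Sum.elim (fun _ => gaussianReal 0 (Real.toNNReal m0⁻¹))
        (fun _ => gaussianReal 0 (Real.toNNReal m1⁻¹)) i)
    (μv : ((Fin p ⊕ Fin k) ⊕ (Fin p ⊕ Fin k)) → ℝ)
    (hμ : μv = Sum.elim (Sum.elim h 0) (Sum.elim h 0))
    (A : Matrix ((Fin p ⊕ Fin k) ⊕ (Fin p ⊕ Fin k)) ((Fin p ⊕ Fin k) ⊕ (Fin p ⊕ Fin k)) ℝ)
    (hA : A = Matrix.fromBlocks
      (Matrix.fromBlocks 0 0 0 (-1)) (Matrix.fromBlocks 1 0 0 1)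
      (Matrix.fromBlocks 1 0 0 1) (Matrix.fromBlocks (-1) 0 0 (-1))) :
    Measure.map (fun ω =>
        m0 * dotProduct (fun i => ε ω i + μv i) (A.mulVec fun i => ε ω i + μv i)) P
      = Measure.map (fun ω =>
          ∑ i : Fin p, (X ω (Fin.castAdd k i) + Real.sqrt m0 * h i) ^ 2
            - ∑ i : Fin (p + k), (X ω i - Real.sqrt (m0 / m1) * Y ω i) ^ 2) P := by
  classical
  obtain ⟨hm0pos, hm0lt⟩ := hm0
  have hm1pos : (0:ℝ) < m1 := by rw [hm1]; linarith
  have hs0 : Real.sqrt m0 ≠ 0 := by positivity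
  have hs1 : Real.sqrt m1 ≠ 0 := by positivity
  haveI hPG : IsProbabilityMeasure (stdGaussian (p + k)) := by
    unfold _root_.stdGaussian; infer_instance
  -- F and G
  set F : (((Fin p ⊕ Fin k) ⊕ (Fin p ⊕ Fin k)) → ℝ) → ℝ := fun v =>
    ∑ i : Fin p, (Real.sqrt m0 * v (.inl (.inl i)) + Real.sqrt m0 * h i)^2
      - ∑ i : Fin p ⊕ Fin k, (Real.sqrt m0 * v (.inl i) - Real.sqrt m0 * v (.inr i))^2
    with hF
  set G : ((Fin (p + k) → ℝ) × (Fin (p + k) → ℝ)) → ℝ := fun z =>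
    ∑ i : Fin p, (z.1 (Fin.castAdd k i) + Real.sqrt m0 * h i) ^ 2
      - ∑ i : Fin (p + k), (z.1 i - Real.sqrt (m0 / m1) * z.2 i) ^ 2
    with hG
  have hFmeas : Measurable F := by
    apply Measurable.sub <;>
    · apply Finset.measurable_sum
      intro i _
      fun_prop
  have hGmeas : Measurable G := by
    apply Measurable.sub <;>
    · apply Finset.measurable_sum
      intro i _
      fun_prop
  haveI hPB : ∀ i : (Fin p ⊕ Fin k) ⊕ (Fin p ⊕ Fin k), IsProbabilityMeasure
      (Sum.elim (fun _ : Fin p ⊕ Fin k => gaussianReal 0 (Real.toNNReal m0⁻¹))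
        (fun _ : Fin p ⊕ Fin k => gaussianReal 0 (Real.toNNReal m1⁻¹)) i) := by
    rintro (i|i) <;> simp only [Sum.elim_inl, Sum.elim_inr] <;> infer_instance
  haveI hSF : ∀ i : (Fin p ⊕ Fin k) ⊕ (Fin p ⊕ Fin k), SigmaFinite
      (Sum.elim (fun _ : Fin p ⊕ Fin k => gaussianReal 0 (Real.toNNReal m0⁻¹))
        (fun _ : Fin p ⊕ Fin k => gaussianReal 0 (Real.toNNReal m1⁻¹)) i) := by
    rintro (i|i) <;> simp only [Sum.elim_inl, Sum.elim_inr] <;> infer_instance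
  -- ae-measurability of the random variables
  have haeε : AEMeasurable ε P := by
    by_contra hc
    rw [Measure.map_of_not_aemeasurable hc] at hε
    exact (IsProbabilityMeasure.ne_zero _) hε.symm
  have haeX : AEMeasurable X P := by
    by_contra hc
    rw [Measure.map_of_not_aemeasurable hc] at hX
    exact (IsProbabilityMeasure.ne_zero _) hX.symm
  have haeY : AEMeasurable Y P := by
    by_contra hc
    rw [Measure.map_of_not_aemeasurable hc] at hY
    exact (IsProbabilityMeasure.ne_zero _) hY.symm
  -- joint law of (X, Y)
  have hpair : Measure.map (fun ω => (X ω, Y ω)) P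
      = (stdGaussian (p + k)).prod (stdGaussian (p + k)) := by
    rw [((indepFun_iff_map_prod_eq_prod_map_map haeX haeY).mp hXY), hX, hY]
  -- the measure-preserving map T
  have h1 : MeasurePreserving
      (⇑(MeasurableEquiv.piCongrLeft (fun _ : Fin (p + k) => ℝ) finSumFinEquiv).symm)
      (stdGaussian (p + k)) (Measure.pi fun _ : Fin p ⊕ Fin k => gaussianReal 0 1) :=
    (measurePreserving_piCongrLeft (fun _ : Fin (p + k) => gaussianReal 0 1) finSumFinEquiv).symm
      (MeasurableEquiv.piCongrLeft (fun _ : Fin (p + k) => ℝ) finSumFinEquiv)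
  have hscale : ∀ (c : ℝ), c ≠ 0 → 0 ≤ c → MeasurePreserving (fun x : ℝ => c⁻¹ * x)
      (gaussianReal 0 1) (gaussianReal 0 (Real.toNNReal (c^2)⁻¹)) := by
    intro c hc hc'
    refine ⟨measurable_id.const_mul _, ?_⟩
    rw [show (fun x : ℝ => c⁻¹ * x) = (c⁻¹ * ·) from rfl, gaussianReal_map_const_mul]
    rw [mul_zero]
    congr 1
    rw [mul_one]
    ext
    rw [Real.coe_toNNReal _ (by positivity)]
    simp [inv_pow]
  have h2 : MeasurePreserving
      (fun (x : (Fin p ⊕ Fin k) → ℝ) i => (Real.sqrt m0)⁻¹ * x i)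
      (Measure.pi fun _ : Fin p ⊕ Fin k => gaussianReal 0 1)
      (Measure.pi fun _ : Fin p ⊕ Fin k => gaussianReal 0 (Real.toNNReal m0⁻¹)) := by
    have := measurePreserving_pi (fun _ : Fin p ⊕ Fin k => gaussianReal 0 1)
      (fun _ : Fin p ⊕ Fin k => gaussianReal 0 (Real.toNNReal m0⁻¹))
      (f := fun _ (x : ℝ) => (Real.sqrt m0)⁻¹ * x) ?_
    · exact this
    · intro i
      have := hscale (Real.sqrt m0) hs0 (Real.sqrt_nonneg _)
      rwa [Real.sq_sqrt hm0pos.le] at this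
  have h2' : MeasurePreserving
      (fun (x : (Fin p ⊕ Fin k) → ℝ) i => (Real.sqrt m1)⁻¹ * x i)
      (Measure.pi fun _ : Fin p ⊕ Fin k => gaussianReal 0 1)
      (Measure.pi fun _ : Fin p ⊕ Fin k => gaussianReal 0 (Real.toNNReal m1⁻¹)) := by
    have := measurePreserving_pi (fun _ : Fin p ⊕ Fin k => gaussianReal 0 1)
      (fun _ : Fin p ⊕ Fin k => gaussianReal 0 (Real.toNNReal m1⁻¹))
      (f := fun _ (x : ℝ) => (Real.sqrt m1)⁻¹ * x) ?_
    · exact this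
    · intro i
      have := hscale (Real.sqrt m1) hs1 (Real.sqrt_nonneg _)
      rwa [Real.sq_sqrt hm1pos.le] at this
  have hu : MeasurePreserving
      (fun (x : Fin (p + k) → ℝ) (i : Fin p ⊕ Fin k) => (Real.sqrt m0)⁻¹ * x (finSumFinEquiv i))
      (stdGaussian (p + k))
      (Measure.pi fun _ : Fin p ⊕ Fin k => gaussianReal 0 (Real.toNNReal m0⁻¹)) :=
    h2.comp h1
  have huY : MeasurePreserving
      (fun (x : Fin (p + k) → ℝ) (i : Fin p ⊕ Fin k) => (Real.sqrt m1)⁻¹ * x (finSumFinEquiv i))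
      (stdGaussian (p + k))
      (Measure.pi fun _ : Fin p ⊕ Fin k => gaussianReal 0 (Real.toNNReal m1⁻¹)) :=
    h2'.comp h1
  have hsum : MeasurePreserving
      (⇑(MeasurableEquiv.sumPiEquivProdPi (fun _ : (Fin p ⊕ Fin k) ⊕ (Fin p ⊕ Fin k) => ℝ)).symm)
      ((Measure.pi fun _ : Fin p ⊕ Fin k => gaussianReal 0 (Real.toNNReal m0⁻¹)).prod
        (Measure.pi fun _ : Fin p ⊕ Fin k => gaussianReal 0 (Real.toNNReal m1⁻¹)))
      (Measure.pi fun i =>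
        Sum.elim (fun _ => gaussianReal 0 (Real.toNNReal m0⁻¹))
          (fun _ => gaussianReal 0 (Real.toNNReal m1⁻¹)) i) :=
    measurePreserving_sumPiEquivProdPi_symm
      (fun i => Sum.elim (fun _ : Fin p ⊕ Fin k => gaussianReal 0 (Real.toNNReal m0⁻¹))
        (fun _ : Fin p ⊕ Fin k => gaussianReal 0 (Real.toNNReal m1⁻¹)) i)
  have hT : MeasurePreserving
      ((⇑(MeasurableEquiv.sumPiEquivProdPi
          (fun _ : (Fin p ⊕ Fin k) ⊕ (Fin p ⊕ Fin k) => ℝ)).symm) ∘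
        (Prod.map
          (fun (x : Fin (p + k) → ℝ) (i : Fin p ⊕ Fin k) =>
            (Real.sqrt m0)⁻¹ * x (finSumFinEquiv i))
          (fun (x : Fin (p + k) → ℝ) (i : Fin p ⊕ Fin k) =>
            (Real.sqrt m1)⁻¹ * x (finSumFinEquiv i))))
      ((stdGaussian (p + k)).prod (stdGaussian (p + k)))
      (Measure.pi fun i =>
        Sum.elim (fun _ => gaussianReal 0 (Real.toNNReal m0⁻¹))
          (fun _ => gaussianReal 0 (Real.toNNReal m1⁻¹)) i) :=
    hsum.comp (hu.prod huY)
  -- F ∘ T = G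
  have hFT : F ∘ ((⇑(MeasurableEquiv.sumPiEquivProdPi
          (fun _ : (Fin p ⊕ Fin k) ⊕ (Fin p ⊕ Fin k) => ℝ)).symm) ∘
        (Prod.map
          (fun (x : Fin (p + k) → ℝ) (i : Fin p ⊕ Fin k) =>
            (Real.sqrt m0)⁻¹ * x (finSumFinEquiv i))
          (fun (x : Fin (p + k) → ℝ) (i : Fin p ⊕ Fin k) =>
            (Real.sqrt m1)⁻¹ * x (finSumFinEquiv i)))) = G := by
    funext z
    obtain ⟨x, y⟩ := z
    simp only [hF, hG, Function.comp_apply, Prod.map_apply,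
      MeasurableEquiv.coe_sumPiEquivProdPi_symm, Equiv.sumPiEquivProdPi_symm_apply]
    have hdiv : Real.sqrt (m0 / m1) = Real.sqrt m0 * (Real.sqrt m1)⁻¹ := by
      rw [Real.sqrt_div hm0pos.le, div_eq_mul_inv]
    congr 1
    · exact Finset.sum_congr rfl fun i _ => by
        rw [finSumFinEquiv_apply_left, ← mul_assoc, mul_inv_cancel₀ hs0, one_mul]
    · refine Fintype.sum_equiv finSumFinEquiv _ _ fun i => ?_
      rw [hdiv, ← mul_assoc, mul_inv_cancel₀ hs0, one_mul, ← mul_assoc]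
  -- put everything together
  have hLHS : (fun ω =>
      m0 * dotProduct (fun i => ε ω i + μv i) (A.mulVec fun i => ε ω i + μv i))
      = F ∘ ε := by
    funext ω
    rw [hμ, hA, hF]
    exact stmt7_alg p k m0 hm0pos.le h (ε ω)
  have hRHS : (fun ω =>
      ∑ i : Fin p, (X ω (Fin.castAdd k i) + Real.sqrt m0 * h i) ^ 2
        - ∑ i : Fin (p + k), (X ω i - Real.sqrt (m0 / m1) * Y ω i) ^ 2)
      = G ∘ (fun ω => (X ω, Y ω)) := rfl
  rw [hLHS, hRHS,
    ← AEMeasurable.map_map_of_aemeasurable hFmeas.aemeasurable haeε,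
    ← AEMeasurable.map_map_of_aemeasurable hGmeas.aemeasurable (haeX.prodMk haeY),
    hε, hpair, ← hT.map_eq,
    Measure.map_map hFmeas hT.measurable, hFT]
end
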